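/- Let K ≥ 2, m ≥ 2, let 𝒦 = (K_0,…,K_{m−1}) be a partition of {0,…,K−1} into nonempty sets, and let P be a nonempty subset of Q_m. Then dim_H {x ∈ Σ_K : μ_𝒦(x) ∩ P ≠ ∅} ≤ sup{g_𝒦(p) : p ∈ P}. -/

import Mathlib

open Filter Set MeasureTheory Topology TopologicalSpace

noncomputable section

/-- The symbolic space `Σ_K` on `K` symbols: sequences `ℕ → Fin K`. -/
def SymbSp (K : ℕ) : Type := ℕ → Fin K

namespace SymbSp

variable {K : ℕ}

theorem exists_ne {x y : SymbSp K} (h : ¬x = y) : ∃ i, x i ≠ y i := by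
  by_contra hc
  push_neg at hc
  exact h (funext hc)

open Classical in
/-- The metric `ρ(x,y) = K^{-δ(x,y)}` on `Σ_K`. -/
def sdist (x y : SymbSp K) : ℝ :=
  if h : x = y then 0 else ((K : ℝ))⁻¹ ^ Nat.find (exists_ne h)

theorem sdist_self (x : SymbSp K) : sdist x x = 0 := by
  unfold sdist
  exact dif_pos rfl

open Classical in
theorem sdist_eq {x y : SymbSp K} (h : ¬x = y) :
    sdist x y = ((K : ℝ))⁻¹ ^ Nat.find (exists_ne h) := by
  unfold sdist
  exact dif_neg h

theorem sdist_nonneg' (x y : SymbSp K) : 0 ≤ sdist x y := by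
  unfold sdist
  split
  · exact le_rfl
  · positivity

theorem inv_cast_le_one (K : ℕ) : ((K : ℝ))⁻¹ ≤ 1 := by
  rcases Nat.eq_zero_or_pos K with h | h
  · simp [h]
  · exact inv_le_one_of_one_le₀ (by exact_mod_cast h)

open Classical in
theorem eq_of_lt_find {x y : SymbSp K} (h : ¬x = y) {i : ℕ}
    (hi : i < Nat.find (exists_ne h)) : x i = y i :=
  not_not.mp (Nat.find_min (exists_ne h) hi)

open Classical in
theorem sdist_le_of_agree {x y : SymbSp K} {n : ℕ} (h : ∀ i < n, x i = y i) :
    sdist x y ≤ ((K : ℝ))⁻¹ ^ n := by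
  by_cases hxy : x = y
  · rw [hxy, sdist_self]; positivity
  · rw [sdist_eq hxy]
    apply pow_le_pow_of_le_one (by positivity) (inv_cast_le_one K)
    rw [Nat.le_find_iff]
    intro m hm
    simp only [ne_eq, not_not]
    exact h m hm

open Classical in
theorem sdist_comm (x y :  SymbSp K) : sdist x y = sdist y x := by
  by_cases h : x = y
  · rw [h]
  · rw [sdist_eq h, sdist_eq (fun hyx => h hyx.symm)]
    congr 1
    exact le_antisymm (Nat.find_mono fun n hn => hn.symm)
      (Nat.find_mono fun n hn => hn.symm)

open Classical in
theorem sdist_le_max (x y z : SymbSp K) : sdist x z ≤ max (sdist x y) (sdist y z) := by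
  by_cases hxz : x = z
  · rw [hxz, sdist_self]
    exact le_max_of_le_left (sdist_nonneg' _ _)
  by_cases hxy : x = y
  · rw [hxy]; exact le_max_right _ _
  by_cases hyz : y = z
  · rw [← hyz]; exact le_max_left _ _
  rcases le_total (Nat.find (exists_ne hxy)) (Nat.find (exists_ne hyz)) with hle | hle
  · refine le_max_of_le_left ?_
    rw [sdist_eq hxy]
    exact sdist_le_of_agree fun i hi =>
      (eq_of_lt_find hxy hi).trans (eq_of_lt_find hyz (lt_of_lt_of_le hi hle))
  · refine le_max_of_le_right ?_
    rw [sdist_eq hyz]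
    exact sdist_le_of_agree fun i hi =>
      (eq_of_lt_find hxy (lt_of_lt_of_le hi hle)).trans (eq_of_lt_find hyz hi)

open Classical in
theorem eq_of_sdist_eq_zero {x y : SymbSp K} (h : sdist x y = 0) : x = y := by
  by_contra hxy
  rw [sdist_eq hxy] at h
  have hK : (0 : ℝ) < (K : ℝ) := by exact_mod_cast Fin.pos (x 0)
  exact absurd h (ne_of_gt (pow_pos (inv_pos.mpr hK) _))

instance : MetricSpace (SymbSp K) where
  dist := sdist
  dist_self := sdist_self
  dist_comm := sdist_comm
  dist_triangle x y z :=
    (sdist_le_max x y z).trans (max_le_add_of_nonneg (sdist_nonneg' _ _) (sdist_nonneg' _ _))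
  eq_of_dist_eq_zero := fun h => eq_of_sdist_eq_zero h

instance : MeasurableSpace (SymbSp K) := borel _

instance : BorelSpace (SymbSp K) := ⟨rfl⟩

instance : SeparableSpace (SymbSp K) := by
  obtain hK | hK | hK : K = 0 ∨ K = 1 ∨ 2 ≤ K := by omega
  · subst hK
    haveI : IsEmpty (SymbSp 0) := ⟨fun x => (x 0).elim0⟩
    exact ⟨⟨Set.univ, Set.countable_univ, dense_univ⟩⟩
  · subst hK
    haveI : Subsingleton (SymbSp 1) := ⟨fun x y => funext fun i => Subsingleton.elim _ _⟩
    exact ⟨⟨Set.univ, Set.countable_univ, dense_univ⟩⟩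
  · refine ⟨⟨Set.range (fun w : (Σ n : ℕ, (Fin n → Fin K)) =>
      (fun i => if h : i < w.1 then w.2 ⟨i, h⟩ else ⟨0, by omega⟩ : SymbSp K)),
      Set.countable_range _, ?_⟩⟩
    rw [Metric.dense_iff]
    intro x r hr
    obtain ⟨n, hn⟩ : ∃ n : ℕ, ((K : ℝ))⁻¹ ^ n < r :=
      exists_pow_lt_of_lt_one hr (inv_lt_one_of_one_lt₀ (by exact_mod_cast hK))
    refine ⟨(fun i => if h : i < n then x i else ⟨0, by omega⟩ : SymbSp K),
      ?_, ⟨⟨n, fun j => x j⟩, rfl⟩⟩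
    refine Metric.mem_ball.mpr ?_
    exact lt_of_le_of_lt (sdist_le_of_agree fun i hi => dif_pos hi) hn

instance : SecondCountableTopology (SymbSp K) :=
  UniformSpace.secondCountable_of_separable _

end SymbSp

/-- The shift map `σ_K` on `Σ_K`. -/
def shift (K : ℕ) : SymbSp K → SymbSp K := fun x i => x (i + 1)

end

namespace Statement15Aux

open Finset

variable {K m : ℕ}

lemma exists_idx (𝒦 : Fin m → Finset (Fin K))
    (hdisj : ∀ i j, i ≠ j → Disjoint (𝒦 i) (𝒦 j))
    (hcover : ∀ a : Fin K, ∃ i, a ∈ 𝒦 i) :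
    ∃ idx : Fin K → Fin m, ∀ a i, a ∈ 𝒦 i ↔ idx a = i := by
  choose idx hidx using hcover
  refine ⟨idx, fun a i => ⟨fun h => ?_, fun h => h ▸ hidx a⟩⟩
  by_contra hne
  exact (Finset.disjoint_left.1 (hdisj _ _ (Ne.symm hne)) h) (hidx a)

variable {𝒦 : Fin m → Finset (Fin K)} {idx : Fin K → Fin m}
  (hidx : ∀ a i, a ∈ 𝒦 i ↔ idx a = i)

include hidx

lemma filter_eq_filter_idx (n : ℕ) (w : Fin n → Fin K) (i : Fin m) :
    (Finset.univ.filter fun j => w j ∈ 𝒦 i) = (Finset.univ.filter fun j => idx (w j) = i) := by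
  ext j; simp [hidx]

lemma sum_cnt (n : ℕ) (w : Fin n → Fin K) :
    ∑ i, (Finset.univ.filter fun j => w j ∈ 𝒦 i).card = n := by
  have := (Finset.card_eq_sum_card_fiberwise
    (fun (j : Fin n) (_ : j ∈ Finset.univ) => Finset.mem_univ (idx (w j)))).symm
  simp only [Finset.card_univ, Fintype.card_fin] at this
  have h2 : ∑ i, (Finset.univ.filter fun j => w j ∈ 𝒦 i).card
      = ∑ i, (Finset.univ.filter fun j => idx (w j) = i).card :=
    Finset.sum_congr rfl fun i _ => by rw [filter_eq_filter_idx hidx n w i]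
  rw [h2]; exact this

lemma prod_word (n : ℕ) (w : Fin n → Fin K) (v : Fin m → ℝ) :
    ∏ j, v (idx (w j)) = ∏ i, v i ^ (Finset.univ.filter fun j => w j ∈ 𝒦 i).card := by
  rw [← Finset.prod_fiberwise_of_maps_to
    (fun (j : Fin n) (_ : j ∈ Finset.univ) => Finset.mem_univ (idx (w j)))
    (fun j => v (idx (w j)))]
  refine Finset.prod_congr rfl fun i _ => ?_
  rw [filter_eq_filter_idx hidx n w i]
  have : ∀ j ∈ Finset.univ.filter fun j => idx (w j) = i, v (idx (w j)) = v i := by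
    intro j hj
    rw [(Finset.mem_filter.1 hj).2]
  rw [Finset.prod_congr rfl this, Finset.prod_const]

lemma sum_card_classes : ∑ i, ((𝒦 i).card) = K := by
  have := (Finset.card_eq_sum_card_fiberwise
    (fun (a : Fin K) (_ : a ∈ Finset.univ) => Finset.mem_univ (idx a))).symm
  simp only [Finset.card_univ, Fintype.card_fin] at this
  have h2 : ∑ i, (𝒦 i).card = ∑ i, (Finset.univ.filter fun a => idx a = i).card := by
    refine Finset.sum_congr rfl fun i _ => congrArg Finset.card ?_
    ext a
    simp only [Finset.mem_filter, Finset.mem_univ, true_and]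
    exact hidx a i
  rw [h2]; exact this

lemma card_words_le (hne : ∀ i, (𝒦 i).Nonempty) (n : ℕ) (hn : 0 < n)
    (c : Fin m → ℕ) (hc : ∑ i, c i = n) :
    ((Finset.univ.filter fun w : Fin n → Fin K =>
        ∀ i, (Finset.univ.filter fun j => w j ∈ 𝒦 i).card = c i).card : ℝ)
      ≤ Real.exp (∑ i, (c i : ℝ) *
          Real.log ((n : ℝ) * ((𝒦 i).card : ℝ) / (c i : ℝ))) := by
  set k : Fin m → ℝ := fun i => ((𝒦 i).card : ℝ) with hk
  have hkpos : ∀ i, 0 < k i := fun i => by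
    have := Finset.card_pos.2 (hne i)
    simp only [hk]
    exact_mod_cast this
  have hnpos : (0 : ℝ) < n := by exact_mod_cast hn
  set v : Fin m → ℝ := fun i => (c i : ℝ) / ((n : ℝ) * k i) with hv
  have hvnn : ∀ i, 0 ≤ v i := fun i =>
    div_nonneg (Nat.cast_nonneg _) (le_of_lt (mul_pos hnpos (hkpos i)))
  set A : ℝ := ∏ i, v i ^ c i with hA
  have hApos : 0 < A := by
    refine Finset.prod_pos fun i _ => ?_
    rcases Nat.eq_zero_or_pos (c i) with h | h
    · simp [h]
    · exact pow_pos (div_pos (by exact_mod_cast h) (mul_pos hnpos (hkpos i))) _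
  have hsumv : ∑ a : Fin K, v (idx a) = 1 := by
    rw [← Finset.sum_fiberwise_of_maps_to
      (fun (a : Fin K) (_ : a ∈ Finset.univ) => Finset.mem_univ (idx a))
      (fun a => v (idx a))]
    have h1 : ∀ i : Fin m, ∑ a ∈ Finset.univ.filter (fun a => idx a = i), v (idx a)
        = (c i : ℝ) / n := by
      intro i
      have hcong : ∀ a ∈ Finset.univ.filter (fun a => idx a = i), v (idx a) = v i :=
        fun a ha => by rw [(Finset.mem_filter.1 ha).2]
      rw [Finset.sum_congr rfl hcong, Finset.sum_const]
      have hcard : (Finset.univ.filter fun a => idx a = i).card = (𝒦 i).card := by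
        congr 1
        ext a
        simp only [Finset.mem_filter, Finset.mem_univ, true_and]
        exact (hidx a i).symm
      rw [hcard, nsmul_eq_mul, hv]
      have hk0 : k i ≠ 0 := ne_of_gt (hkpos i)
      have hn0 : (n : ℝ) ≠ 0 := ne_of_gt hnpos
      field_simp [hk]
      ring
    rw [Finset.sum_congr rfl (fun i _ => h1 i), ← Finset.sum_div]
    rw [show ∑ i, (c i : ℝ) = ((∑ i, c i : ℕ) : ℝ) by push_cast; rfl, hc]
    field_simp
  have hmain : ∑ w : Fin n → Fin K, ∏ j, v (idx (w j)) = 1 := by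
    have hps := Finset.prod_univ_sum (fun _ : Fin n => (Finset.univ : Finset (Fin K)))
      (fun _ a => v (idx a))
    rw [Fintype.piFinset_univ] at hps
    rw [← hps]
    simp [hsumv]
  set W := Finset.univ.filter fun w : Fin n → Fin K =>
      ∀ i, (Finset.univ.filter fun j => w j ∈ 𝒦 i).card = c i with hW
  have hWsum : (W.card : ℝ) * A ≤ 1 := by
    have heq : ∑ w ∈ W, ∏ j, v (idx (w j)) = (W.card : ℝ) * A := by
      have hcong : ∀ w ∈ W, ∏ j, v (idx (w j)) = A := by
        intro w hw
        rw [prod_word hidx n w v, hA]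
        exact Finset.prod_congr rfl fun i _ => by
          rw [(Finset.mem_filter.1 hw).2 i]
      rw [Finset.sum_congr rfl hcong, Finset.sum_const, nsmul_eq_mul]
    rw [← heq, ← hmain]
    exact Finset.sum_le_sum_of_subset_of_nonneg (Finset.filter_subset _ _)
      (fun w _ _ => Finset.prod_nonneg fun j _ => hvnn _)
  have hE : Real.exp (∑ i, (c i : ℝ) * Real.log ((n : ℝ) * k i / (c i : ℝ)))
      = ∏ i, ((n : ℝ) * k i / (c i : ℝ)) ^ c i := by
    rw [Real.exp_sum]
    refine Finset.prod_congr rfl fun i _ => ?_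
    rcases Nat.eq_zero_or_pos (c i) with h | h
    · simp [h]
    · rw [Real.exp_nat_mul, Real.exp_log
        (div_pos (mul_pos hnpos (hkpos i)) (by exact_mod_cast h))]
  have hAE : A * (∏ i, ((n : ℝ) * k i / (c i : ℝ)) ^ c i) = 1 := by
    rw [hA, ← Finset.prod_mul_distrib]
    have hcong : ∀ i ∈ Finset.univ, v i ^ c i * ((n : ℝ) * k i / (c i : ℝ)) ^ c i = 1 := by
      intro i _
      rcases Nat.eq_zero_or_pos (c i) with h | h
      · simp [h]
      · rw [← mul_pow]
        have hc0 : (c i : ℝ) ≠ 0 := by positivity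
        have : v i * ((n : ℝ) * k i / (c i : ℝ)) = 1 := by
          rw [hv]
          field_simp
          exact div_self (ne_of_gt (hkpos i))
        rw [this, one_pow]
    rw [Finset.prod_congr rfl hcong, Finset.prod_const_one]
  rw [hE]
  have h1 : (W.card : ℝ) * A ≤ (∏ i, ((n : ℝ) * k i / (c i : ℝ)) ^ c i) * A := by
    have h2 : (∏ i, ((n : ℝ) * k i / (c i : ℝ)) ^ c i) * A = 1 := by
      rw [mul_comm]; exact hAE
    rw [h2]; exact hWsum
  exact le_of_mul_le_mul_right h1 hApos

omit hidx in
lemma neg_mul_log_div (x kk : ℝ) (hx : 0 ≤ x) (hkk : 0 < kk) :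
    -(x * Real.log (x / kk)) = -(x * Real.log x) + x * Real.log kk := by
  rcases eq_or_lt_of_le hx with h | h
  · rw [← h]; simp
  · rw [Real.log_div (ne_of_gt h) (ne_of_gt hkk)]; ring

omit hidx in
lemma bridge (n : ℕ) (hn : 0 < n) (c : Fin m → ℕ) :
    ∑ i, (c i : ℝ) * Real.log ((n : ℝ) * ((𝒦 i).card : ℝ) / (c i : ℝ))
      = (n : ℝ) * ∑ i, -(((c i : ℝ) / n) * Real.log (((c i : ℝ) / n) / ((𝒦 i).card : ℝ))) := by
  rw [Finset.mul_sum]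
  refine Finset.sum_congr rfl fun i _ => ?_
  have hnpos : (0 : ℝ) < n := by exact_mod_cast hn
  rcases Nat.eq_zero_or_pos (c i) with h | h
  · simp [h]
  · have hcpos : (0 : ℝ) < (c i : ℝ) := by exact_mod_cast h
    have h1 : ((c i : ℝ) / n) / ((𝒦 i).card : ℝ) = (c i : ℝ) / ((n : ℝ) * ((𝒦 i).card : ℝ)) := by
      rw [div_div]
    have h2 : (n : ℝ) * ((𝒦 i).card : ℝ) / (c i : ℝ)
        = ((c i : ℝ) / ((n : ℝ) * ((𝒦 i).card : ℝ)))⁻¹ := by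
      rw [inv_div]
    rw [h1, h2, Real.log_inv]
    field_simp

/-- Entropy bound: `F q ≤ log K` on the simplex. -/
lemma F_le_logK (hK : 0 < K) (hne : ∀ i, (𝒦 i).Nonempty)
    (q : Fin m → ℝ) (h0 : ∀ i, 0 ≤ q i) (hsum : ∑ i, q i = 1) :
    ∑ i, -(q i * Real.log (q i / ((𝒦 i).card : ℝ))) ≤ Real.log K := by
  have hKpos : (0 : ℝ) < K := by exact_mod_cast hK
  have key : ∀ i ∈ Finset.univ, -(q i * Real.log (q i / ((𝒦 i).card : ℝ))) - q i * Real.log K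
      ≤ ((𝒦 i).card : ℝ) / K - q i := by
    intro i _
    have hkpos : (0 : ℝ) < ((𝒦 i).card : ℝ) := by exact_mod_cast Finset.card_pos.2 (hne i)
    rcases eq_or_lt_of_le (h0 i) with h | h
    · rw [← h]
      simp
      positivity
    · have hx : (0 : ℝ) < ((𝒦 i).card : ℝ) / (q i * K) := by positivity
      have hlog := Real.log_le_sub_one_of_pos hx
      have h1 : Real.log (((𝒦 i).card : ℝ) / (q i * K))
          = Real.log ((𝒦 i).card : ℝ) - Real.log (q i) - Real.log K := by
        rw [Real.log_div (ne_of_gt hkpos) (by positivity), Real.log_mul (ne_of_gt h) (ne_of_gt hKpos)]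
        ring
      have h2 : Real.log (q i / ((𝒦 i).card : ℝ)) = Real.log (q i) - Real.log ((𝒦 i).card : ℝ) :=
        Real.log_div (ne_of_gt h) (ne_of_gt hkpos)
      have h3 := mul_le_mul_of_nonneg_left hlog (le_of_lt h)
      have h4 : q i * (((𝒦 i).card : ℝ) / (q i * K) - 1) = ((𝒦 i).card : ℝ) / K - q i := by
        field_simp
      rw [h1] at h3
      rw [h2]
      rw [h4] at h3
      nlinarith [h3]
  have hs := Finset.sum_le_sum key
  rw [Finset.sum_sub_distrib] at hs
  have hsc : ∑ i, q i * Real.log K = Real.log K := by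
    rw [← Finset.sum_mul, hsum, one_mul]
  have hrhs : ∑ i ∈ Finset.univ, (((𝒦 i).card : ℝ) / K - q i) = 0 := by
    rw [Finset.sum_sub_distrib, ← Finset.sum_div]
    rw [show ∑ i, ((𝒦 i).card : ℝ) = ((∑ i, (𝒦 i).card : ℕ) : ℝ) by push_cast; rfl]
    rw [sum_card_classes hidx, hsum, div_self (ne_of_gt hKpos)]
    ring
  rw [hsc, hrhs] at hs
  linarith

omit hidx in
lemma modulus (hK : 2 ≤ K) (hm : 0 < m) (hne : ∀ i, (𝒦 i).Nonempty) {η : ℝ} (hη : 0 < η) :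
    ∃ ε > 0, ∀ q r : Fin m → ℝ, (∀ i, 0 ≤ q i ∧ q i ≤ 1) → (∀ i, 0 ≤ r i ∧ r i ≤ 1) →
      (∀ i, |q i - r i| ≤ ε) →
      ∑ i, -(q i * Real.log (q i / ((𝒦 i).card : ℝ)))
        ≤ (∑ i, -(r i * Real.log (r i / ((𝒦 i).card : ℝ)))) + η := by
  have hmpos : (0 : ℝ) < m := by exact_mod_cast hm
  have hlogK : (0 : ℝ) < Real.log K :=
    Real.log_pos (by exact_mod_cast hK)
  have huc := (isCompact_Icc (a := (0:ℝ)) (b := 1)).uniformContinuousOn_of_continuous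
    Real.continuous_mul_log.continuousOn
  rw [Metric.uniformContinuousOn_iff] at huc
  obtain ⟨δ, hδpos, hδ⟩ := huc (η / (2 * m)) (by positivity)
  refine ⟨min (δ / 2) (η / (2 * m * Real.log K)), lt_min (by positivity) (by positivity), ?_⟩
  intro q r hq hr hqr
  set ε := min (δ / 2) (η / (2 * m * Real.log K)) with hε
  have key : ∀ i ∈ Finset.univ, -(q i * Real.log (q i / ((𝒦 i).card : ℝ)))
      ≤ -(r i * Real.log (r i / ((𝒦 i).card : ℝ))) + η / m := by
    intro i _
    have hkpos : (0 : ℝ) < ((𝒦 i).card : ℝ) := by exact_mod_cast Finset.card_pos.2 (hne i)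
    have hk1 : (1 : ℝ) ≤ ((𝒦 i).card : ℝ) := by exact_mod_cast Finset.card_pos.2 (hne i)
    have hkK : ((𝒦 i).card : ℝ) ≤ (K : ℝ) := by
      exact_mod_cast Finset.card_le_univ (𝒦 i) |>.trans_eq (by simp)
    rw [neg_mul_log_div (q i) _ (hq i).1 hkpos, neg_mul_log_div (r i) _ (hr i).1 hkpos]
    -- bound on φ = x * log x part
    have hqmem : q i ∈ Set.Icc (0:ℝ) 1 := ⟨(hq i).1, (hq i).2⟩
    have hrmem : r i ∈ Set.Icc (0:ℝ) 1 := ⟨(hr i).1, (hr i).2⟩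
    have hdist : dist (q i) (r i) < δ := by
      rw [Real.dist_eq]
      calc |q i - r i| ≤ ε := hqr i
        _ ≤ δ / 2 := min_le_left _ _
        _ < δ := by linarith
    have hφ := hδ (q i) hqmem (r i) hrmem hdist
    rw [Real.dist_eq] at hφ
    have h1 : -(q i * Real.log (q i)) ≤ -(r i * Real.log (r i)) + η / (2 * m) := by
      have := abs_le.1 (le_of_lt hφ)
      nlinarith [this.1, this.2]
    -- bound on the x * log k part
    have hlogk0 : 0 ≤ Real.log ((𝒦 i).card : ℝ) := Real.log_nonneg hk1
    have hlogkK : Real.log ((𝒦 i).card : ℝ) ≤ Real.log K :=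
      Real.log_le_log (by positivity) hkK
    have h2 : q i * Real.log ((𝒦 i).card : ℝ)
        ≤ r i * Real.log ((𝒦 i).card : ℝ) + η / (2 * m) := by
      have hab : (q i - r i) * Real.log ((𝒦 i).card : ℝ) ≤ ε * Real.log K := by
        calc (q i - r i) * Real.log ((𝒦 i).card : ℝ)
            ≤ |q i - r i| * Real.log ((𝒦 i).card : ℝ) :=
              mul_le_mul_of_nonneg_right (le_abs_self _) hlogk0
          _ ≤ ε * Real.log K := by
              apply mul_le_mul (hqr i) hlogkK hlogk0
              exact le_trans (abs_nonneg _) (hqr i)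
      have hεb : ε * Real.log K ≤ η / (2 * m) := by
        have : ε ≤ η / (2 * m * Real.log K) := min_le_right _ _
        calc ε * Real.log K ≤ (η / (2 * m * Real.log K)) * Real.log K :=
              mul_le_mul_of_nonneg_right this (le_of_lt hlogK)
          _ = η / (2 * m) := by field_simp
      nlinarith [hab, hεb]
    have hsum2 : η / (2 * (m:ℝ)) + η / (2 * (m:ℝ)) = η / m := by
      field_simp
      ring
    linarith
  calc ∑ i, -(q i * Real.log (q i / ((𝒦 i).card : ℝ)))
      ≤ ∑ i, (-(r i * Real.log (r i / ((𝒦 i).card : ℝ))) + η / m) := Finset.sum_le_sum key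
    _ = (∑ i, -(r i * Real.log (r i / ((𝒦 i).card : ℝ)))) + η := by
        rw [Finset.sum_add_distrib, Finset.sum_const, Finset.card_univ, Fintype.card_fin,
          nsmul_eq_mul, mul_div_cancel₀ _ (ne_of_gt hmpos)]

lemma card_filter_le (hne : ∀ i, (𝒦 i).Nonempty) (n : ℕ) (hn : 0 < n)
    (Q : (Fin m → ℕ) → Prop) [DecidablePred Q] (B : ℝ) (hB0 : 0 ≤ B)
    (hgood : ∀ c : Fin m → ℕ, ∑ i, c i = n → Q c →
      Real.exp (∑ i, (c i : ℝ) * Real.log ((n : ℝ) * ((𝒦 i).card : ℝ) / (c i : ℝ))) ≤ B) :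
    ((Finset.univ.filter fun w : Fin n → Fin K =>
        Q (fun i => (Finset.univ.filter fun j => w j ∈ 𝒦 i).card)).card : ℝ)
      ≤ ((n : ℝ) + 1) ^ m * B := by
  classical
  set cnt : (Fin n → Fin K) → Fin m → ℕ :=
    fun w i => (Finset.univ.filter fun j => w j ∈ 𝒦 i).card with hcnt
  have hcntle : ∀ w i, cnt w i < n + 1 := fun w i =>
    Nat.lt_succ_of_le ((Finset.card_filter_le _ _).trans (by simp))
  set ψ : (Fin n → Fin K) → (Fin m → Fin (n + 1)) :=
    fun w i => ⟨cnt w i, hcntle w i⟩ with hψ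
  set V := Finset.univ.filter fun w : Fin n → Fin K => Q (cnt w) with hV
  have hcard : V.card = ∑ c : Fin m → Fin (n + 1), (V.filter fun w => ψ w = c).card :=
    Finset.card_eq_sum_card_fiberwise fun w _ => Finset.mem_univ _
  have hper : ∀ c : Fin m → Fin (n + 1), ((V.filter fun w => ψ w = c).card : ℝ) ≤ B := by
    intro c
    rcases (V.filter fun w => ψ w = c).eq_empty_or_nonempty with h | ⟨w₀, hw₀⟩
    · rw [h]; simpa using hB0
    · obtain ⟨hw₀V, hw₀c⟩ := Finset.mem_filter.1 hw₀
      have hQ : Q (cnt w₀) := (Finset.mem_filter.1 hw₀V).2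
      have hsum : ∑ i, cnt w₀ i = n := sum_cnt hidx n w₀
      have hsubset : (V.filter fun w => ψ w = c) ⊆
          Finset.univ.filter fun w : Fin n → Fin K =>
            ∀ i, (Finset.univ.filter fun j => w j ∈ 𝒦 i).card = cnt w₀ i := by
        intro w hw
        obtain ⟨_, hwc⟩ := Finset.mem_filter.1 hw
        refine Finset.mem_filter.2 ⟨Finset.mem_univ _, fun i => ?_⟩
        have := congrFun (hwc.trans hw₀c.symm) i
        exact congrArg Fin.val this
      calc ((V.filter fun w => ψ w = c).card : ℝ)
          ≤ ((Finset.univ.filter fun w : Fin n → Fin K =>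
              ∀ i, (Finset.univ.filter fun j => w j ∈ 𝒦 i).card = cnt w₀ i).card : ℝ) := by
            exact_mod_cast Finset.card_le_card hsubset
        _ ≤ Real.exp (∑ i, ((cnt w₀ i : ℕ) : ℝ) *
              Real.log ((n : ℝ) * ((𝒦 i).card : ℝ) / ((cnt w₀ i : ℕ) : ℝ))) :=
            card_words_le hidx hne n hn (cnt w₀) hsum
        _ ≤ B := hgood (cnt w₀) hsum hQ
  calc (V.card : ℝ) = ∑ c : Fin m → Fin (n + 1), ((V.filter fun w => ψ w = c).card : ℝ) := by
        rw [hcard]; push_cast; rfl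
    _ ≤ ∑ _c : Fin m → Fin (n + 1), B := Finset.sum_le_sum fun c _ => hper c
    _ = ((n : ℝ) + 1) ^ m * B := by
        rw [Finset.sum_const, Finset.card_univ, nsmul_eq_mul]
        congr 1
        rw [Fintype.card_pi]
        push_cast
        simp

omit hidx in
lemma cnt_range (x : ℕ → Fin K) (M : ℕ) (i : Fin m) :
    (Finset.univ.filter fun j : Fin M => x j ∈ 𝒦 i).card
      = ((Finset.range M).filter fun j => x j ∈ 𝒦 i).card := by
  rw [Finset.card_filter, Finset.card_filter]
  exact Fin.sum_univ_eq_sum_range (fun j => if x j ∈ 𝒦 i then 1 else 0) M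

end Statement15Aux


set_option maxHeartbeats 2000000 in
open Classical in
/-- Let `K ≥ 2`, `m ≥ 2`, `𝒦` a partition of `{0,…,K−1}` into
nonempty sets, and `∅ ≠ P ⊆ Q_m`. Then the set of `x ∈ Σ_K` whose distributional
density spectrum `μ_𝒦(x)` (the set of limit points of the frequency vectors
`μ_{𝒦,n}(x)`) meets `P` has Hausdorff dimension at most `sup g_𝒦(P)`, where
`g_𝒦(p) = (∑_i −p_i ln(p_i/#K_i)) / ln K`. -/
theorem statement_15 (K m : ℕ) (hK : 2 ≤ K) (hm : 2 ≤ m)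
    (𝒦 : Fin m → Finset (Fin K)) (hne : ∀ i, (𝒦 i).Nonempty)
    (hdisj : ∀ i j, i ≠ j → Disjoint (𝒦 i) (𝒦 j))
    (hcover : ∀ a : Fin K, ∃ i, a ∈ 𝒦 i)
    (P : Set (Fin m → ℝ)) (hP : P.Nonempty)
    (hPQ : ∀ p ∈ P, (∀ i, 0 ≤ p i ∧ p i ≤ 1) ∧ (∑ i, p i) = 1) :
    dimH {x : SymbSp K | ∃ r ∈ P, MapClusterPt r Filter.atTop
        (fun n : ℕ => fun i : Fin m =>
          (((Finset.range n).filter (fun j => x j ∈ 𝒦 i)).card : ℝ) / n)} ≤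
      ENNReal.ofReal (sSup ((fun p : Fin m → ℝ =>
        (∑ i, -(p i * Real.log (p i / (𝒦 i).card))) / Real.log K) '' P)) := by
  classical
  obtain ⟨idx, hidx⟩ := Statement15Aux.exists_idx 𝒦 hdisj hcover
  have hKpos : 0 < K := by omega
  have hlogKpos : (0:ℝ) < Real.log K := Real.log_pos (by exact_mod_cast hK)
  set F : (Fin m → ℝ) → ℝ := fun p => ∑ i, -(p i * Real.log (p i / ((𝒦 i).card : ℝ)))
    with hFdef
  set s0 : ℝ := sSup ((fun p : Fin m → ℝ => F p / Real.log K) '' P) with hs0def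
  have hFnn : ∀ p ∈ P, 0 ≤ F p := by
    intro p hp
    refine Finset.sum_nonneg fun i _ => ?_
    have h0 := ((hPQ p hp).1 i).1
    have h1 := ((hPQ p hp).1 i).2
    have hk1 : (1:ℝ) ≤ ((𝒦 i).card : ℝ) := by exact_mod_cast Finset.card_pos.2 (hne i)
    have hdiv1 : p i / ((𝒦 i).card : ℝ) ≤ 1 := by
      rw [div_le_one (by linarith)]
      linarith
    have hlognp : Real.log (p i / ((𝒦 i).card : ℝ)) ≤ 0 :=
      Real.log_nonpos (by positivity) hdiv1
    nlinarith
  have hbdd : BddAbove ((fun p : Fin m → ℝ => F p / Real.log K) '' P) := by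
    refine ⟨1, ?_⟩
    rintro x ⟨p, hp, rfl⟩
    rw [div_le_one hlogKpos]
    exact Statement15Aux.F_le_logK hidx hKpos hne p (fun i => ((hPQ p hp).1 i).1)
      (hPQ p hp).2
  have hs0nn : 0 ≤ s0 := by
    obtain ⟨p, hp⟩ := hP
    have h1 : 0 ≤ F p / Real.log K := div_nonneg (hFnn p hp) hlogKpos.le
    exact le_trans h1 (le_csSup hbdd ⟨p, hp, rfl⟩)
  have hFP : ∀ p ∈ P, F p ≤ s0 * Real.log K := by
    intro p hp
    have h1 := le_csSup hbdd (Set.mem_image_of_mem _ hp)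
    rwa [div_le_iff₀ hlogKpos] at h1
  set E := {x : SymbSp K | ∃ r ∈ P, MapClusterPt r Filter.atTop
      (fun n : ℕ => fun i : Fin m =>
        (((Finset.range n).filter (fun j => x j ∈ 𝒦 i)).card : ℝ) / n)} with hEdef
  apply dimH_le
  intro d' hd'
  by_contra hcon
  push_neg at hcon
  have hd'pos : 0 < d' := by
    rcases eq_or_lt_of_le (show (0:NNReal) ≤ d' from zero_le) with h | h
    · rw [← h] at hcon
      simp at hcon
    · exact h
  have hdpos : (0:ℝ) < (d' : ℝ) := by exact_mod_cast hd'pos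
  have hd : s0 < (d' : ℝ) := by
    by_contra h
    push_neg at h
    refine absurd hcon (not_lt.2 ?_)
    rw [← ENNReal.ofReal_coe_nnreal]
    exact ENNReal.ofReal_le_ofReal h
  set d : ℝ := (d' : ℝ) with hddef
  set s' : ℝ := (s0 + d)/2 with hs'def
  have hs0s' : s0 < s' := by rw [hs'def]; linarith
  have hs'd : s' < d := by rw [hs'def]; linarith
  have hηpos : 0 < (s' - s0) * Real.log K := mul_pos (by linarith) hlogKpos
  obtain ⟨ε, hεpos, hεmod⟩ := Statement15Aux.modulus (𝒦 := 𝒦) hK (by omega) hne hηpos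
  have hclose : ∀ q : Fin m → ℝ, (∀ i, 0 ≤ q i ∧ q i ≤ 1) →
      (∃ p ∈ P, ∀ i, |q i - p i| ≤ ε) → F q ≤ s' * Real.log K := by
    intro q hq hex
    obtain ⟨p, hpP, hqp⟩ := hex
    have h1 := hεmod q p hq (hPQ p hpP).1 hqp
    have h2 := hFP p hpP
    have h3 : s0 * Real.log K + (s' - s0) * Real.log K = s' * Real.log K := by ring
    calc F q ≤ F p + (s' - s0) * Real.log K := h1
      _ ≤ s' * Real.log K := by linarith
  have hcount : ∀ M : ℕ, 0 < M →
      ((Finset.univ.filter fun w : Fin M → Fin K => ∃ p ∈ P, ∀ i,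
        |(((Finset.univ.filter fun j => w j ∈ 𝒦 i).card : ℝ)) / M - p i| ≤ ε).card : ℝ)
      ≤ ((M:ℝ)+1)^m * Real.exp (M * (s' * Real.log K)) := by
    intro M hM
    have hMpos : (0:ℝ) < M := by exact_mod_cast hM
    have hgood : ∀ c : Fin m → ℕ, ∑ i, c i = M →
        (∃ p ∈ P, ∀ i, |((c i : ℝ)) / M - p i| ≤ ε) →
        Real.exp (∑ i, (c i : ℝ) * Real.log ((M : ℝ) * ((𝒦 i).card : ℝ) / (c i : ℝ)))
          ≤ Real.exp (M * (s' * Real.log K)) := by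
      intro c hc hQ
      rw [Statement15Aux.bridge (𝒦 := 𝒦) M hM c]
      apply Real.exp_le_exp.2
      refine mul_le_mul_of_nonneg_left ?_ hMpos.le
      refine hclose _ (fun i => ⟨by positivity, ?_⟩) hQ
      rw [div_le_one hMpos]
      have hle : c i ≤ M := by
        rw [← hc]
        exact Finset.single_le_sum (f := fun i => c i) (fun i _ => Nat.zero_le _)
          (Finset.mem_univ i)
      exact_mod_cast hle
    have h := Statement15Aux.card_filter_le hidx hne M hM
      (fun c : Fin m → ℕ => ∃ p ∈ P, ∀ i, |((c i : ℝ)) / M - p i| ≤ ε)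
      (Real.exp (M * (s' * Real.log K))) (Real.exp_nonneg _) hgood
    simpa using h
  set V : ∀ M : ℕ, Finset (Fin M → Fin K) := fun M =>
    Finset.univ.filter fun w : Fin M → Fin K => ∃ p ∈ P, ∀ i,
      |(((Finset.univ.filter fun j => w j ∈ 𝒦 i).card : ℝ)) / M - p i| ≤ ε with hVdef
  have hdiam : ∀ (M : ℕ) (w : Fin M → Fin K),
      EMetric.diam {x : SymbSp K | ∀ j : Fin M, x j = w j}
        ≤ ENNReal.ofReal (((K:ℝ))⁻¹ ^ M) := by
    intro M w
    apply EMetric.diam_le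
    intro x hx y hy
    rw [edist_dist]
    apply ENNReal.ofReal_le_ofReal
    have hxy : ∀ j, j < M → x j = y j := fun j hj =>
      (hx ⟨j, hj⟩).trans (hy ⟨j, hj⟩).symm
    exact SymbSp.sdist_le_of_agree hxy
  set t : ∀ N : ℕ, ((n : ℕ) × {w // w ∈ V (N+1+n)}) → Set (SymbSp K) :=
    fun N p => {x : SymbSp K | ∀ j : Fin (N+1+p.1), x j = p.2.1 j} with htdef
  have hKinv0 : (0:ℝ) ≤ ((K:ℝ))⁻¹ := by positivity
  have hKinv1 : ((K:ℝ))⁻¹ < 1 := by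
    apply inv_lt_one_of_one_lt₀
    exact_mod_cast (by omega : 1 < K)
  set rr : ℕ → ENNReal := fun N => ENNReal.ofReal (((K:ℝ))⁻¹ ^ (N+1)) with hrrdef
  have hrr : Filter.Tendsto rr Filter.atTop (𝓝 0) := by
    have h1 : Filter.Tendsto (fun N : ℕ => ((K:ℝ))⁻¹ ^ N) Filter.atTop (𝓝 0) :=
      tendsto_pow_atTop_nhds_zero_of_lt_one hKinv0 hKinv1
    have h2 := h1.comp (Filter.tendsto_add_atTop_nat 1)
    have h3 := ENNReal.tendsto_ofReal h2
    rw [ENNReal.ofReal_zero] at h3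
    refine Filter.Tendsto.congr (fun N => ?_) h3
    rfl
  have ht : ∀ N (i : (n : ℕ) × {w // w ∈ V (N+1+n)}), EMetric.diam (t N i) ≤ rr N := by
    rintro N ⟨n, w, hw⟩
    refine le_trans (hdiam _ _) (ENNReal.ofReal_le_ofReal ?_)
    exact pow_le_pow_of_le_one hKinv0 hKinv1.le (by omega)
  have hst : ∀ N, E ⊆ ⋃ i, t N i := by
    intro N x hx
    obtain ⟨p, hpP, hcl⟩ := hx
    rw [mapClusterPt_iff_frequently] at hcl
    have hfreq := hcl (Metric.ball p ε) (Metric.ball_mem_nhds _ hεpos)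
    rw [Filter.frequently_atTop] at hfreq
    obtain ⟨M, hMge, hMball⟩ := hfreq (N+1)
    obtain ⟨n, rfl⟩ : ∃ n, M = N+1+n := ⟨M - (N+1), by omega⟩
    have hwV : (fun j : Fin (N+1+n) => x j) ∈ V (N+1+n) := by
      rw [hVdef]
      refine Finset.mem_filter.2 ⟨Finset.mem_univ _, ⟨p, hpP, fun i => ?_⟩⟩
      have htrans := Statement15Aux.cnt_range (𝒦 := 𝒦) x (N+1+n) i
      rw [Metric.mem_ball] at hMball
      have hcoord := dist_le_pi_dist (fun i : Fin m =>
        ((((Finset.range (N+1+n)).filter fun j => x j ∈ 𝒦 i).card : ℝ)) / ((N+1+n : ℕ) : ℝ)) p i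
      have hlt := lt_of_le_of_lt hcoord hMball
      rw [Real.dist_eq] at hlt
      show |(((Finset.univ.filter fun j : Fin (N+1+n) => x j ∈ 𝒦 i).card : ℝ))
          / ((N+1+n : ℕ) : ℝ) - p i| ≤ ε
      rw [htrans]
      refine le_of_lt (lt_of_eq_of_lt ?_ hlt)
      congr
    exact Set.mem_iUnion.2 ⟨⟨n, ⟨fun j : Fin (N+1+n) => x j, hwV⟩⟩, fun j => rfl⟩
  have hμ := MeasureTheory.Measure.hausdorffMeasure_le_liminf_tsum d E rr hrr t
    (Filter.Eventually.of_forall ht) (Filter.Eventually.of_forall hst)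
  set ρ : ℝ := Real.exp (-((d - s') * Real.log K)) with hρdef
  have hρpos : 0 < ρ := Real.exp_pos _
  have hρ1 : ρ < 1 := by
    rw [hρdef, Real.exp_lt_one_iff]
    nlinarith
  set b : ℕ → ℝ := fun M => ((M:ℝ)+1)^m * ρ^M with hbdef
  have hbnn : ∀ M, 0 ≤ b M := fun M => by
    rw [hbdef]
    positivity
  have hbsum : Summable b := by
    have h0 : Summable (fun M : ℕ => ((M:ℝ))^m * ρ^M) := by
      have h0' := summable_pow_mul_geometric_of_norm_lt_one (R := ℝ) m
        (r := ρ) (by rw [Real.norm_eq_abs, abs_of_pos hρpos]; exact hρ1)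
      exact h0'
    have h1 : Summable (fun M : ℕ => (((M+1 : ℕ)):ℝ)^m * ρ^(M+1)) :=
      (summable_nat_add_iff 1).2 h0
    have h2 := h1.mul_left ρ⁻¹
    refine h2.congr fun M => ?_
    rw [hbdef]
    push_cast
    have hρ0 : ρ ≠ 0 := ne_of_gt hρpos
    field_simp
    ring
  have hexpρ : ∀ M : ℕ, Real.exp ((M:ℝ) * (s' * Real.log K)) *
      Real.exp (-((M:ℝ) * (d * Real.log K))) = ρ^M := by
    intro M
    rw [hρdef, ← Real.exp_add, ← Real.exp_nat_mul]
    congr 1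
    ring
  have hinner : ∀ N n, (∑' w : {w // w ∈ V (N+1+n)}, EMetric.diam (t N ⟨n, w⟩) ^ d)
      ≤ ENNReal.ofReal (b (N+1+n)) := by
    intro N n
    have hMpos : 0 < N+1+n := by omega
    have hstep : ∀ w : {w // w ∈ V (N+1+n)}, EMetric.diam (t N ⟨n, w⟩) ^ d
        ≤ ENNReal.ofReal (Real.exp (-(((N+1+n : ℕ):ℝ) * (d * Real.log K)))) := by
      intro w
      have h1 : EMetric.diam (t N ⟨n, w⟩) ≤ ENNReal.ofReal (((K:ℝ))⁻¹ ^ (N+1+n)) :=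
        hdiam (N+1+n) w.1
      have h2 := ENNReal.rpow_le_rpow h1 hdpos.le
      refine le_trans h2 (le_of_eq ?_)
      have hpow : (0:ℝ) < ((K:ℝ))⁻¹ ^ (N+1+n) := by positivity
      rw [ENNReal.ofReal_rpow_of_pos hpow]
      congr 1
      rw [Real.rpow_def_of_pos hpow, Real.log_pow, Real.log_inv]
      push_cast
      ring
    calc (∑' w : {w // w ∈ V (N+1+n)}, EMetric.diam (t N ⟨n, w⟩) ^ d)
        ≤ ∑' _w : {w // w ∈ V (N+1+n)},
            ENNReal.ofReal (Real.exp (-(((N+1+n : ℕ):ℝ) * (d * Real.log K)))) :=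
          ENNReal.tsum_le_tsum hstep
      _ = ((V (N+1+n)).card : ENNReal) *
            ENNReal.ofReal (Real.exp (-(((N+1+n : ℕ):ℝ) * (d * Real.log K)))) := by
          rw [tsum_fintype, Finset.sum_const, Finset.card_univ, Fintype.card_coe,
            nsmul_eq_mul]
      _ ≤ ENNReal.ofReal ((((N+1+n : ℕ):ℝ)+1)^m *
            Real.exp (((N+1+n : ℕ):ℝ) * (s' * Real.log K))) *
            ENNReal.ofReal (Real.exp (-(((N+1+n : ℕ):ℝ) * (d * Real.log K)))) := by
          apply mul_le_mul_left
          rw [← ENNReal.ofReal_natCast ((V (N+1+n)).card)]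
          apply ENNReal.ofReal_le_ofReal
          have hc := hcount (N+1+n) hMpos
          rw [hVdef]
          exact hc
      _ = ENNReal.ofReal (b (N+1+n)) := by
          rw [← ENNReal.ofReal_mul (by positivity)]
          congr 1
          rw [hbdef, mul_assoc, hexpρ (N+1+n)]
  have hTS : ∀ N, (∑' i : (n : ℕ) × {w // w ∈ V (N+1+n)}, EMetric.diam (t N i) ^ d)
      ≤ ENNReal.ofReal (∑' n : ℕ, b (n + (N+1))) := by
    intro N
    rw [ENNReal.tsum_sigma']
    have hcomm : ∀ n : ℕ, b (N+1+n) = b (n + (N+1)) := fun n => by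
      congr 1
      omega
    calc (∑' (n : ℕ) (w : {w // w ∈ V (N+1+n)}), EMetric.diam (t N ⟨n, w⟩) ^ d)
        ≤ ∑' n : ℕ, ENNReal.ofReal (b (N+1+n)) :=
          ENNReal.tsum_le_tsum fun n => hinner N n
      _ = ∑' n : ℕ, ENNReal.ofReal (b (n + (N+1))) := by
          apply tsum_congr
          intro n
          rw [hcomm n]
      _ = ENNReal.ofReal (∑' n : ℕ, b (n + (N+1))) := by
          rw [← ENNReal.ofReal_tsum_of_nonneg (fun n => hbnn _)
            ((summable_nat_add_iff (N+1)).2 hbsum)]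
  have htail : Filter.Tendsto (fun N : ℕ => ENNReal.ofReal (∑' n : ℕ, b (n + (N+1))))
      Filter.atTop (𝓝 0) := by
    have h1 : Filter.Tendsto (fun N : ℕ => ∑' n : ℕ, b (n + N)) Filter.atTop (𝓝 0) :=
      tendsto_sum_nat_add b
    have h2 := h1.comp (Filter.tendsto_add_atTop_nat 1)
    have h3 := ENNReal.tendsto_ofReal h2
    simpa [Function.comp] using h3
  have hzero : μH[d] E = 0 := by
    have hle := le_trans hμ (Filter.liminf_le_liminf (Filter.Eventually.of_forall hTS))
    rw [htail.liminf_eq] at hle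
    exact le_antisymm hle zero_le
  rw [hzero] at hd'
  exact ENNReal.zero_ne_top hd'
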